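/- Let A, B be bounded positive operators on a complex Hilbert space H. If there exists a contraction C (i.e., ‖C‖ ≤ 1) with C B + B C* = 2A, then A ≤ (1/(2t)) B² + (t/2)·I for every positive real t. -/

import Mathlib

open scoped InnerProductSpace

variable {H : Type*} [NormedAddCommGroup H] [InnerProductSpace ℂ H] [CompleteSpace H]

theorem stmt2 (A B C : H →L[ℂ] H) (hA : 0 ≤ A) (hB : 0 ≤ B) (hC : ‖C‖ ≤ 1)
    (h : C * B + B * star C = 2 • A) :
    ∀ t : ℝ, 0 < t → A ≤ (1 / (2 * t)) • B ^ 2 + (t / 2) • (1 : H →L[ℂ] H) := by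
  intro t ht
  have hApos := (ContinuousLinearMap.nonneg_iff_isPositive A).mp hA
  have hBpos := (ContinuousLinearMap.nonneg_iff_isPositive B).mp hB
  have hAsa : IsSelfAdjoint A := hApos.isSelfAdjoint
  have hBsa : IsSelfAdjoint B := hBpos.isSelfAdjoint
  rw [ContinuousLinearMap.le_def]
  constructor
  · have h1 : IsSelfAdjoint ((1 / (2 * t)) • B ^ 2 : H →L[ℂ] H) :=
      IsSelfAdjoint.smul (star_trivial _) (hBsa.pow 2)
    have h2 : IsSelfAdjoint ((t / 2) • (1 : H →L[ℂ] H)) :=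
      IsSelfAdjoint.smul (star_trivial _) (IsSelfAdjoint.one _)
    exact ((h1.add h2).sub hAsa).isSymmetric
  · intro x
    have hBadj : ContinuousLinearMap.adjoint B = B := hBsa.adjoint_eq
    set a := ‖B x‖ with ha
    set b := ‖x‖ with hb
    have hx : A x + A x = C (B x) + B ((star C) x) := by
      have := congrArg (fun T : H →L[ℂ] H => T x) h
      simpa [two_smul] using this.symm
    have e1 : ⟪B ((star C) x), x⟫_ℂ = ⟪(star C) x, B x⟫_ℂ := by
      have := ContinuousLinearMap.adjoint_inner_left B x ((star C) x)
      rwa [hBadj] at this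
    have e2 : ⟪(star C) x, B x⟫_ℂ = ⟪x, C (B x)⟫_ℂ := by
      rw [ContinuousLinearMap.star_eq_adjoint, ContinuousLinearMap.adjoint_inner_left]
    have hsum : ⟪A x + A x, x⟫_ℂ = ⟪C (B x), x⟫_ℂ + ⟪x, C (B x)⟫_ℂ := by
      rw [hx, inner_add_left, e1, e2]
    have hre := congrArg RCLike.re hsum
    rw [inner_add_left, map_add, map_add] at hre
    have hconj : RCLike.re ⟪x, C (B x)⟫_ℂ = RCLike.re ⟪C (B x), x⟫_ℂ := by
      rw [← inner_conj_symm]; exact RCLike.conj_re _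
    have hA2 : 2 * RCLike.re ⟪A x, x⟫_ℂ = 2 * RCLike.re ⟪C (B x), x⟫_ℂ := by
      rw [hconj] at hre; linarith
    have hbound : RCLike.re ⟪C (B x), x⟫_ℂ ≤ a * b := by
      calc RCLike.re ⟪C (B x), x⟫_ℂ ≤ ‖⟪C (B x), x⟫_ℂ‖ := RCLike.re_le_norm _
        _ ≤ ‖C (B x)‖ * ‖x‖ := norm_inner_le_norm _ _
        _ ≤ (‖C‖ * ‖B x‖) * ‖x‖ := by gcongr; exact C.le_opNorm _
        _ ≤ (1 * ‖B x‖) * ‖x‖ := by gcongr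
        _ = a * b := by rw [ha, hb]; ring
    have hamgm : 2 * (a * b) ≤ (1 / t) * a ^ 2 + t * b ^ 2 := by
      have h0 : 0 ≤ (a - t * b) ^ 2 := sq_nonneg _
      have h1 : 2 * (a * b) * t ≤ a ^ 2 + t ^ 2 * b ^ 2 := by nlinarith
      have h2 : (2 * (a * b) * t) / t ≤ (a ^ 2 + t ^ 2 * b ^ 2) / t := by gcongr
      calc 2 * (a * b) = (2 * (a * b) * t) / t := by field_simp
        _ ≤ (a ^ 2 + t ^ 2 * b ^ 2) / t := h2
        _ = (1 / t) * a ^ 2 + t * b ^ 2 := by field_simp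
    have hB2 : RCLike.re ⟪(B ^ 2) x, x⟫_ℂ = a ^ 2 := by
      have hp : (B ^ 2) x = B (B x) := by simp [pow_two]
      have e := ContinuousLinearMap.adjoint_inner_left B x (B x)
      rw [hBadj] at e
      rw [hp, e]
      simp [ha, inner_self_eq_norm_sq]
      rw [← Complex.ofReal_pow, Complex.ofReal_re]
    rw [ContinuousLinearMap.reApplyInnerSelf]
    simp only [ContinuousLinearMap.sub_apply, ContinuousLinearMap.add_apply,
      ContinuousLinearMap.smul_apply, ContinuousLinearMap.one_apply,
      inner_sub_left, inner_add_left, map_sub, map_add]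
    have hs1 : RCLike.re ⟪(1 / (2 * t)) • (B ^ 2) x, x⟫_ℂ
        = (1 / (2 * t)) * a ^ 2 := by
      rw [RCLike.real_smul_eq_coe_smul (K := ℂ), inner_smul_left, RCLike.conj_ofReal,
        RCLike.re_ofReal_mul, hB2]
    have hs2 : RCLike.re ⟪(t / 2 : ℝ) • x, x⟫_ℂ = (t / 2) * b ^ 2 := by
      rw [RCLike.real_smul_eq_coe_smul (K := ℂ), inner_smul_left, RCLike.conj_ofReal,
        RCLike.re_ofReal_mul]
      simp [hb, inner_self_eq_norm_sq]
      left; rw [← Complex.ofReal_pow, Complex.ofReal_re]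
    rw [hs1, hs2]
    have heq : (1 : ℝ) / (2 * t) = (1 / t) / 2 := by rw [one_div, one_div, mul_inv, div_eq_mul_inv]; ring
    have hnew : a * b ≤ 1 / (2 * t) * a ^ 2 + t / 2 * b ^ 2 := by rw [heq]; linarith
    linarith
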